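/- Let Ω_n count tuples (ν_1,…,ν_N) of nonnegative integers with ν_i ≤ 2j_i and ∑ ν_i = n, and set 2J_0 = ∑ 2j_i. Then the sequence Ω_0, Ω_1, …, Ω_{2J_0} is unimodal: Ω_n ≤ Ω_{n'} whenever n < n' ≤ ⌊J_0⌋; in particular the maximum is attained at n = ⌊J_0⌋. -/

import Mathlib

open Finset

private def cnt (N : ℕ) (d : Fin N → ℕ) (n : ℕ) : ℕ :=
  (Finset.univ.filter
    (fun ν : (i : Fin N) → Fin (d i + 1) => ∑ i, ((ν i : ℕ)) = n)).card

/-- symmetric (about `D/2`) unimodal function supported on `[0, D]` -/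
private def IsGU (D : ℕ) (f : ℕ → ℕ) : Prop :=
  (∀ n, 2 * (n + 1) ≤ D → f n ≤ f (n + 1)) ∧
  (∀ k, k ≤ D → f k = f (D - k)) ∧
  (∀ k, D < k → f k = 0)

private lemma IsGU.mono {D : ℕ} {f : ℕ → ℕ} (h : IsGU D f) :
    ∀ m n, m ≤ n → n + m ≤ D → f m ≤ f n := by
  have aux : ∀ m n, m ≤ n → 2 * n ≤ D → f m ≤ f n := by
    intro m n hmn
    induction n, hmn using Nat.le_induction with
    | base => intro _; exact le_rfl
    | succ n hmn ih =>
      intro h2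
      exact le_trans (ih (by omega)) (h.1 n h2)
  intro m n hmn hD
  by_cases h2 : 2 * n ≤ D
  · exact aux m n hmn h2
  · rw [h.2.1 n (by omega)]
    exact aux m (D - n) (by omega) (by omega)

private lemma conv_rep {D : ℕ} {f : ℕ → ℕ} (hv : ∀ k, D < k → f k = 0) (e n : ℕ) :
    ∑ j ∈ Icc (n - e) n, f j
      = ∑ j ∈ range (D + 1), if n - e ≤ j ∧ j ≤ n then f j else 0 := by
  have h1 : ∑ j ∈ Icc (n - e) n, f j
      = ∑ j ∈ (Icc (n - e) n).filter (fun j => j ≤ D), f j := by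
    refine (Finset.sum_filter_of_ne ?_).symm
    intro x _ hfx
    by_contra hxD
    exact hfx (hv x (by omega))
  have h2 : (Icc (n - e) n).filter (fun j => j ≤ D)
      = (range (D + 1)).filter (fun j => n - e ≤ j ∧ j ≤ n) := by
    ext j
    simp only [Finset.mem_filter, Finset.mem_Icc, Finset.mem_range]
    omega
  rw [h1, h2, Finset.sum_filter]

private lemma IsGU.conv {D : ℕ} {f : ℕ → ℕ} (h : IsGU D f) (e : ℕ) :
    IsGU (D + e) (fun n => ∑ j ∈ Icc (n - e) n, f j) := by
  obtain ⟨hstep, hsym, hvan⟩ := h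
  refine ⟨?_, ?_, ?_⟩
  · intro n h2
    simp only
    by_cases he : e ≤ n
    · have hrw : n + 1 - e = (n - e) + 1 := by omega
      rw [hrw, sum_Icc_succ_top (by omega) f,
        Finset.Icc_eq_cons_Ioc (Nat.sub_le n e), Finset.sum_cons, ← Finset.Icc_add_one_left_eq_Ioc]
      have hle : f (n - e) ≤ f (n + 1) :=
        IsGU.mono ⟨hstep, hsym, hvan⟩ (n - e) (n + 1) (by omega) (by omega)
      omega
    · have h0 : n - e = 0 := by omega
      have h0' : n + 1 - e = 0 := by omega
      rw [h0, h0']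
      exact Finset.sum_le_sum_of_subset (Finset.Icc_subset_Icc_right (by omega))
  · intro k hk
    simp only
    rw [conv_rep hvan e k, conv_rep hvan e (D + e - k)]
    conv_rhs => rw [← Finset.sum_range_reflect]
    refine Finset.sum_congr rfl fun j hj => ?_
    rw [Finset.mem_range] at hj
    simp only [Nat.add_sub_cancel]
    rw [hsym j (by omega)]
    exact if_congr (by omega) rfl rfl
  · intro k hk
    simp only
    apply Finset.sum_eq_zero
    intro j hj
    rw [Finset.mem_Icc] at hj
    exact hvan j (by omega)

private lemma cnt_zero (d : Fin 0 → ℕ) (n : ℕ) :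
    cnt 0 d n = if n = 0 then 1 else 0 := by
  unfold cnt
  by_cases hn : n = 0
  · subst hn; simp
  · simp [hn, Finset.filter_eq_empty_iff, eq_comm]

private lemma sum_shift (g : ℕ → ℕ) (e n : ℕ) :
    ∑ k ∈ range (e + 1), (if k ≤ n then g (n - k) else 0) = ∑ j ∈ Icc (n - e) n, g j := by
  rw [← Finset.sum_filter]
  refine Finset.sum_nbij' (fun k => n - k) (fun j => n - j) ?_ ?_ ?_ ?_ ?_
  · intro a ha
    simp only [Finset.mem_filter, Finset.mem_range] at ha
    simp only [Finset.mem_Icc]; omega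
  · intro a ha
    simp only [Finset.mem_Icc] at ha
    simp only [Finset.mem_filter, Finset.mem_range]; omega
  · intro a ha
    simp only [Finset.mem_filter, Finset.mem_range] at ha
    omega
  · intro a ha
    simp only [Finset.mem_Icc] at ha
    omega
  · intro a _; rfl

private lemma cnt_succ (N : ℕ) (d : Fin (N + 1) → ℕ) (n : ℕ) :
    cnt (N + 1) d n
      = ∑ j ∈ Icc (n - d (Fin.last N)) n, cnt N (fun i => d i.castSucc) j := by
  have h1 : cnt (N + 1) d n
      = Fintype.card {ν : (i : Fin (N + 1)) → Fin (d i + 1) // ∑ i, ((ν i : ℕ)) = n} :=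
    (Fintype.card_subtype _).symm
  have E : {ν : (i : Fin (N + 1)) → Fin (d i + 1) // ∑ i, ((ν i : ℕ)) = n}
      ≃ Σ k : Fin (d (Fin.last N) + 1),
          {ν' : (i : Fin N) → Fin (d i.castSucc + 1) //
            ((k : ℕ) + ∑ i, ((ν' i : ℕ)) = n)} := by
    refine Equiv.trans
      ((Equiv.subtypeEquiv (Fin.snocEquiv (fun i => Fin (d i + 1))) (fun x => ?_)).symm)
      (Equiv.subtypeProdEquivSigmaSubtype
        (fun (k : Fin (d (Fin.last N) + 1))
             (ν' : (i : Fin N) → Fin (d i.castSucc + 1)) => (k : ℕ) + ∑ i, ((ν' i : ℕ)) = n))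
    rw [Fin.sum_univ_castSucc]
    simp [Fin.snocEquiv, add_comm]
  have h2 : ∀ k : Fin (d (Fin.last N) + 1),
      Fintype.card {ν' : (i : Fin N) → Fin (d i.castSucc + 1) //
          ((k : ℕ) + ∑ i, ((ν' i : ℕ)) = n)}
        = if (k : ℕ) ≤ n then cnt N (fun i => d i.castSucc) (n - (k : ℕ)) else 0 := by
    intro k
    by_cases hk : (k : ℕ) ≤ n
    · rw [if_pos hk]
      have : cnt N (fun i => d i.castSucc) (n - (k : ℕ))
          = Fintype.card {ν' : (i : Fin N) → Fin (d i.castSucc + 1) //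
              ∑ i, ((ν' i : ℕ)) = n - (k : ℕ)} := (Fintype.card_subtype _).symm
      rw [this]
      have hiff : ∀ ν' : (i : Fin N) → Fin (d i.castSucc + 1),
          ((k : ℕ) + ∑ i, ((ν' i : ℕ)) = n) ↔ (∑ i, ((ν' i : ℕ)) = n - (k : ℕ)) := by
        intro ν'
        clear this h1 E
        omega
      exact Fintype.card_congr (Equiv.subtypeEquivRight hiff)
    · rw [if_neg hk, Fintype.card_eq_zero_iff]
      refine ⟨fun x => hk ?_⟩
      obtain ⟨ν', hν'⟩ := x
      clear h1 E
      omega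
  rw [h1, Fintype.card_congr E, Fintype.card_sigma]
  simp_rw [h2]
  have hr := Fin.sum_univ_eq_sum_range
    (fun m => if m ≤ n then cnt N (fun i => d i.castSucc) (n - m) else 0) (d (Fin.last N) + 1)
  rw [hr]
  exact sum_shift _ _ _

private lemma isGU_cnt : ∀ N (d : Fin N → ℕ), IsGU (∑ i, d i) (cnt N d) := by
  intro N
  induction N with
  | zero =>
    intro d
    have hz : ∀ n, cnt 0 d n = if n = 0 then 1 else 0 := cnt_zero d
    have hD : ∑ i, d i = 0 := by simp
    rw [hD]
    refine ⟨fun n h2 => absurd h2 (by omega), fun k hk => ?_, fun k hk => ?_⟩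
    · have hk0 : k = 0 := by omega
      subst hk0; rfl
    · rw [hz k, if_neg (by omega)]
  | succ N ih =>
    intro d
    have hD : ∑ i, d i = (∑ i : Fin N, d i.castSucc) + d (Fin.last N) :=
      Fin.sum_univ_castSucc d
    rw [hD]
    have hfun : cnt (N + 1) d
        = fun n => ∑ j ∈ Icc (n - d (Fin.last N)) n, cnt N (fun i => d i.castSucc) j :=
      funext (cnt_succ N d)
    rw [hfun]
    exact (ih (fun i => d i.castSucc)).conv (d (Fin.last N))

/-- unimodality of the block dimensions `Ω_n` (the number of tuples
`(ν i)` with `0 ≤ ν i ≤ d i`, `d i = 2 j_i`, and `∑ ν i = n`): `Ω_n ≤ Ω_{n'}`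
whenever `n < n' ≤ ⌊J₀⌋ = (∑ d i)/2`; in particular the maximum of the sequence
`Ω_0, …, Ω_{2J₀}` is attained at `n = ⌊J₀⌋`. -/
theorem block_dimension_unimodal (N : ℕ) (d : Fin N → ℕ)
    (Ω : ℕ → ℕ)
    (hΩ : ∀ n, Ω n =
      (Finset.univ.filter
        (fun ν : (i : Fin N) → Fin (d i + 1) => ∑ i, ((ν i : ℕ)) = n)).card) :
    (∀ n n' : ℕ, n < n' → n' ≤ (∑ i, d i) / 2 → Ω n ≤ Ω n') ∧
    (∀ n : ℕ, n ≤ ∑ i, d i → Ω n ≤ Ω ((∑ i, d i) / 2)) := by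
  have hΩc : ∀ n, Ω n = cnt N d n := hΩ
  have hgu := isGU_cnt N d
  have hmono := hgu.mono
  set D := ∑ i, d i with hDdef
  constructor
  · intro n n' hnn' hn'
    rw [hΩc n, hΩc n']
    exact hmono n n' (by omega) (by omega)
  · intro n hn
    rw [hΩc n, hΩc (D / 2)]
    by_cases hc : n ≤ D / 2
    · exact hmono n (D / 2) hc (by omega)
    · rw [hgu.2.1 n hn]
      exact hmono (D - n) (D / 2) (by omega) (by omega)
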